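/- For every prime p, every integer r ≥ 0, and every integer n ≥ 0, the Delannoy number D(n, p^r - 1) is not divisible by p. -/

import Mathlib

/-- Delannoy numbers: `D n 0 = D 0 k = 1`, and
`D (n+1) (k+1) = D (n+1) k + D n k + D n (k+1)`. -/
def D : ℕ → ℕ → ℕ
  | _, 0 => 1
  | 0, _ => 1
  | n + 1, k + 1 => D (n + 1) k + D n k + D n (k + 1)
termination_by n k => n + k

open Finset in
def S (n k N : ℕ) : ℕ := ∑ i ∈ Finset.range N, n.choose i * k.choose i * 2 ^ i

open Finset

lemma D_zero_right (n : ℕ) : D n 0 = 1 := by rw [D]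

lemma D_zero_left (k : ℕ) : D 0 k = 1 := by
  cases k
  · rw [D]
  · rw [D]
    omega

lemma D_succ_succ (n k : ℕ) : D (n+1) (k+1) = D (n+1) k + D n k + D n (k+1) := by rw [D]

lemma S_trunc (n k N M : ℕ) (h : N ≤ M) (hk : k < N) : S n k M = S n k N := by
  unfold S
  rw [← Finset.sum_subset (Finset.range_subset_range.2 h)]
  intro i hi hni
  simp only [mem_range, not_lt] at hni
  rw [Nat.choose_eq_zero_of_lt (lt_of_lt_of_le hk hni)]
  ring

lemma S_succ' (a b N : ℕ) : S a b (N+1) =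
    (∑ i ∈ range N, a.choose (i+1) * b.choose (i+1) * 2 ^ (i+1)) + 1 := by
  unfold S
  rw [Finset.sum_range_succ']
  simp

lemma key (n k N : ℕ) (hk : k < N) :
    S (n+1) (k+1) (N+1) = S (n+1) k (N+1) + S n k (N+1) + S n (k+1) (N+1) := by
  have e1 : S n k (N+1) = S n k N := S_trunc n k N (N+1) (Nat.le_succ N) hk
  simp only [S_succ']
  simp only [Nat.choose_succ_succ]
  have expand : ∀ i ∈ range N,
      (n.choose i + n.choose (i+1)) * (k.choose i + k.choose (i+1)) * 2 ^ (i+1)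
      = n.choose i * k.choose i * 2 ^ i * 2 + n.choose i * k.choose (i+1) * 2 ^ (i+1)
        + n.choose (i+1) * k.choose i * 2 ^ (i+1) + n.choose (i+1) * k.choose (i+1) * 2 ^ (i+1) := by
    intro i _
    ring
  rw [Finset.sum_congr rfl expand]
  have expand2 : ∀ i ∈ range N,
      (n.choose i + n.choose (i+1)) * k.choose (i+1) * 2 ^ (i+1)
      = n.choose i * k.choose (i+1) * 2 ^ (i+1) + n.choose (i+1) * k.choose (i+1) * 2 ^ (i+1) := by
    intro i _; ring
  rw [Finset.sum_congr rfl expand2]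
  have expand3 : ∀ i ∈ range N,
      n.choose (i+1) * (k.choose i + k.choose (i+1)) * 2 ^ (i+1)
      = n.choose (i+1) * k.choose i * 2 ^ (i+1) + n.choose (i+1) * k.choose (i+1) * 2 ^ (i+1) := by
    intro i _; ring
  rw [Finset.sum_congr rfl expand3]
  simp only [Finset.sum_add_distrib]
  have e2 : ∑ i ∈ range N, n.choose i * k.choose i * 2 ^ i * 2 = S n k N * 2 := by
    rw [← Finset.sum_mul]; rfl
  rw [e2]
  have e3 : S n k (N+1) = (∑ i ∈ range N, n.choose (i+1) * k.choose (i+1) * 2 ^ (i+1)) + 1 :=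
    S_succ' n k N
  omega

lemma Dsum (n k : ℕ) : D n k = S n k (n + k + 1) := by
  induction n generalizing k with
  | zero =>
    rw [D_zero_left]
    unfold S
    rw [Finset.sum_eq_single 0]
    · simp
    · intro i _ hi
      rw [Nat.choose_eq_zero_of_lt (Nat.pos_of_ne_zero hi)]
      ring
    · simp
  | succ n ih =>
    induction k with
    | zero =>
      rw [D_zero_right]
      unfold S
      rw [Finset.sum_eq_single 0]
      · simp
      · intro i _ hi
        rw [Nat.choose_eq_zero_of_lt (Nat.pos_of_ne_zero hi)]
        ring
      · simp
    | succ k ihk =>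
      rw [D_succ_succ]
      rw [ihk, ih k, ih (k+1)]
      have h1 : S (n+1) k (n+1+k+1) = S (n+1) k (n+k+1+1) := by ring_nf
      have h2 : S n k (n+k+1) = S n k (n+k+1+1) :=
        (S_trunc n k (n+k+1) (n+k+1+1) (Nat.le_succ _) (by omega)).symm
      have h3 : S n (k+1) (n+(k+1)+1) = S n (k+1) (n+k+1+1) := by ring_nf
      have h4 : S (n+1) (k+1) (n+1+(k+1)+1) = S (n+1) (k+1) (n+k+1+1) :=
        S_trunc _ _ _ _ (by omega) (by omega)
      rw [h1, h2, h3, h4]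
      exact (key n k (n+k+1) (by omega)).symm

section Part2

variable {p : ℕ} [hFp : Fact p.Prime]

lemma choose_p_sub_one (s : ℕ) (hs : s < p) : (((p-1).choose s : ℕ) : ZMod p) = (-1)^s := by
  have hp := hFp.out
  induction s with
  | zero => simp
  | succ s ih =>
    have h1 : p - 1 + 1 = p := Nat.succ_pred_eq_of_pos hp.pos
    have pascal : (p-1).choose s + (p-1).choose (s+1) = p.choose (s+1) := by
      conv_rhs => rw [← h1]
      rw [Nat.choose_succ_succ]
    have hdvd : ((p.choose (s+1) : ℕ) : ZMod p) = 0 := by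
      rw [ZMod.natCast_eq_zero_iff]
      exact Nat.Prime.dvd_choose_self hp (by omega) hs
    have hcast : (((p-1).choose s : ℕ) : ZMod p) + ((p-1).choose (s+1) : ℕ) = 0 := by
      rw [← Nat.cast_add, pascal, hdvd]
    rw [ih (by omega)] at hcast
    rw [pow_succ]
    linear_combination hcast

lemma neg_one_pow_p : (-1 : ZMod p)^p = -1 := by
  rcases hFp.out.eq_two_or_odd' with h | h
  · subst h
    have h1 : (-1 : ZMod 2) = 1 := CharTwo.neg_eq 1
    rw [h1, one_pow]
  · exact h.neg_one_pow

lemma choose_pow_sub_one (r : ℕ) : ∀ i, i < p^r → (((p^r - 1).choose i : ℕ) : ZMod p) = (-1)^i := by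
  have hp := hFp.out
  induction r with
  | zero =>
    intro i hi
    rw [pow_zero] at hi
    have : i = 0 := by omega
    subst this; simp
  | succ r ih =>
    intro i hi
    have hp0 : 0 < p := hp.pos
    have hq : 1 ≤ p^r := Nat.one_le_pow _ _ hp.pos
    obtain ⟨q, hq'⟩ : ∃ q, p^r = q + 1 := ⟨p^r - 1, by omega⟩
    have hrw : p^(r+1) - 1 = (p-1) + q * p := by
      rw [pow_succ, hq', add_mul, one_mul]
      omega
    have hmod : (p^(r+1) - 1) % p = p - 1 := by
      rw [hrw, Nat.add_mul_mod_self_right, Nat.mod_eq_of_lt (by omega)]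
    have hdiv : (p^(r+1) - 1) / p = p^r - 1 := by
      rw [hrw, Nat.add_mul_div_right _ _ hp.pos, Nat.div_eq_of_lt (by omega)]
      omega
    have key := Choose.choose_modEq_choose_mod_mul_choose_div (p := p) (n := p^(r+1)-1) (k := i)
    have h2 : (((p^(r+1)-1).choose i : ℕ) : ZMod p)
        = (((p^(r+1)-1) % p).choose (i % p) : ℕ) * (((p^(r+1)-1) / p).choose (i / p) : ℕ) := by
      have := (ZMod.intCast_eq_intCast_iff _ _ _).mpr key
      push_cast at this ⊢
      exact_mod_cast this
    rw [h2, hmod, hdiv]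
    rw [choose_p_sub_one _ (Nat.mod_lt _ hp.pos)]
    rw [ih _ (by
      rw [Nat.div_lt_iff_lt_mul hp.pos, ← pow_succ]
      exact hi)]
    conv_rhs => rw [← Nat.mod_add_div i p, pow_add, pow_mul, neg_one_pow_p]

lemma lucas_mod_pow (n i r : ℕ) (hi : i < p^r) :
    ((n.choose i : ℕ) : ZMod p) = (((n % p^r).choose i : ℕ) : ZMod p) := by
  have hp := hFp.out
  have h1 := Choose.choose_modEq_choose_mul_prod_range_choose (p := p) (n := n) (k := i) r
  have h2 := Choose.choose_modEq_choose_mul_prod_range_choose (p := p) (n := n % p^r) (k := i) r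
  have hprod : ∀ j ∈ Finset.range r,
      ((n % p^r) / p^j % p).choose (i / p^j % p) = (n / p^j % p).choose (i / p^j % p) := by
    intro j hj
    rw [Finset.mem_range] at hj
    have : n % p^r / p^j = n / p^j % p^(r-j) := by
      rw [show p^r = p^j * p^(r-j) by rw [← pow_add]; congr 1; omega]
      exact Nat.mod_mul_right_div_self n (p^j) (p^(r-j))
    rw [this, Nat.mod_mod_of_dvd _ (dvd_pow_self p (by omega))]
  have hi0 : i / p^r = 0 := Nat.div_eq_of_lt hi
  have hn0 : n % p^r / p^r = 0 := Nat.div_eq_of_lt (Nat.mod_lt _ (Nat.pow_pos hp.pos))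
  have e1 := (ZMod.intCast_eq_intCast_iff _ _ _).mpr h1
  have e2 := (ZMod.intCast_eq_intCast_iff _ _ _).mpr h2
  rw [hi0] at e1 e2
  rw [hn0] at e2
  rw [Finset.prod_congr rfl hprod] at e2
  simp only [Nat.choose_zero_right] at e1 e2
  push_cast at e1 e2
  rw [e1, e2]

end Part2

theorem delannoy_stmt_9 (p : ℕ) (hp : p.Prime) (r n : ℕ) :
    ¬ p ∣ D n (p ^ r - 1) := by
  haveI : Fact p.Prime := ⟨hp⟩
  intro hdvd
  have hppos := hp.pos
  have hq : 1 ≤ p^r := Nat.one_le_pow _ _ hppos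
  set K := p^r - 1 with hK
  have hK1 : K + 1 = p^r := by omega
  have h0 : ((D n K : ℕ) : ZMod p) = 0 := (by rw [ZMod.natCast_eq_zero_iff]; exact hdvd)
  rw [Dsum, S_trunc n K (p^r) _ (by omega) (by omega)] at h0
  set b := n % p^r with hb
  have hbK : b < p^r := Nat.mod_lt _ (by positivity)
  have hsum : ((S n K (p^r) : ℕ) : ZMod p) = (-1 : ZMod p)^b := by
    unfold S
    push_cast
    have hterm : ∀ i ∈ Finset.range (p^r),
        ((n.choose i : ℕ) : ZMod p) * (K.choose i : ℕ) * (2:ZMod p)^i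
        = (b.choose i : ℕ) * (-2 : ZMod p)^i := by
      intro i hi
      rw [Finset.mem_range] at hi
      rw [lucas_mod_pow n i r hi, choose_pow_sub_one r i hi]
      conv_rhs => rw [neg_pow]
      ring
    rw [Finset.sum_congr rfl hterm]
    have hrestrict : ∑ i ∈ Finset.range (p^r), ((b.choose i : ℕ) : ZMod p) * (-2)^i
        = ∑ i ∈ Finset.range (b+1), ((b.choose i : ℕ) : ZMod p) * (-2)^i := by
      rw [← Finset.sum_subset (Finset.range_subset_range.2 (by omega : b+1 ≤ p^r))]
      intro i hi hni
      simp only [Finset.mem_range, not_lt] at hni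
      rw [Nat.choose_eq_zero_of_lt (by omega)]
      simp
    rw [hrestrict]
    rw [show ∑ i ∈ Finset.range (b+1), ((b.choose i : ℕ) : ZMod p) * (-2)^i
        = ∑ i ∈ Finset.range (b+1), (-2 : ZMod p)^i * 1^(b-i) * (b.choose i) from
      Finset.sum_congr rfl (fun i _ => by ring)]
    rw [← add_pow]
    norm_num
  rw [hsum] at h0
  exact pow_ne_zero b (neg_ne_zero.mpr one_ne_zero) h0
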